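/- Let p ≥ 2, let μ be a probability measure on ℝ^d with ∫‖x‖₂^p dμ(x) < ∞, and suppose β ≥ 1 satisfies (∫|⟨x,v⟩|^p dμ(x))^{1/p} ≤ β (∫|⟨x,v⟩|² dμ(x))^{1/2} for all v ∈ ℝ^d. Then for every d×d real matrix M, (∫‖Mx‖₂^p dμ(x))^{1/p} ≤ β ‖B^{1/2} Mᵀ‖_F, where B = ∫ xxᵀ dμ(x). -/

import Mathlib

open MeasureTheory
open scoped Matrix
open scoped ENNReal RealInnerProductSpace Classical

noncomputable section

/-- The outer product `x xᵀ` of a vector in Euclidean space, as a matrix. -/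
def outer {d : ℕ} (x : EuclideanSpace ℝ (Fin d)) : Matrix (Fin d) (Fin d) ℝ :=
  Matrix.of fun i j => x i * x j

/-- The trace inner product `⟨A, B⟩ = Tr (A B)` on symmetric matrices. -/
def minner {d : ℕ} (A B : Matrix (Fin d) (Fin d) ℝ) : ℝ :=
  Matrix.trace (A * B)

/-- The Frobenius norm of a matrix. -/
def frobNorm {d : ℕ} (M : Matrix (Fin d) (Fin d) ℝ) : ℝ :=
  Real.sqrt (∑ i, ∑ j, (M i j) ^ 2)

/-- Entrywise integral of a matrix-valued function. -/
def mIntegral {d : ℕ} (μ : Measure (EuclideanSpace ℝ (Fin d)))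
    (F : EuclideanSpace ℝ (Fin d) → Matrix (Fin d) (Fin d) ℝ) :
    Matrix (Fin d) (Fin d) ℝ :=
  Matrix.of fun i j => ∫ x, F x i j ∂μ

/-- The fourth moment operator `T_μ (A) = ∫ ⟨A, xxᵀ⟩ xxᵀ dμ(x)`. -/
def fourthMomentOp {d : ℕ} (μ : Measure (EuclideanSpace ℝ (Fin d)))
    (A : Matrix (Fin d) (Fin d) ℝ) : Matrix (Fin d) (Fin d) ℝ :=
  mIntegral μ (fun x => minner A (outer x) • outer x)

/-- The second moment matrix `B = ∫ xxᵀ dμ(x)`. -/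
def secondMoment {d : ℕ} (μ : Measure (EuclideanSpace ℝ (Fin d))) :
    Matrix (Fin d) (Fin d) ℝ :=
  mIntegral μ outer

/-- `lam : ℕ → ℝ` lists the eigenvalues (with multiplicity) of the fourth moment operator
`T_μ`, viewed as an operator on the `d(d+1)/2`-dimensional inner product space of symmetric
matrices, in descending order, padded by `0` beyond index `d(d+1)/2`. -/
def IsEigenSeq {d : ℕ} (μ : Measure (EuclideanSpace ℝ (Fin d))) (lam : ℕ → ℝ) : Prop :=
  Antitone lam ∧ (∀ i, d * (d + 1) / 2 ≤ i → lam i = 0) ∧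
  ∃ b : Fin (d * (d + 1) / 2) → Matrix (Fin d) (Fin d) ℝ,
    (∀ i, (b i).IsSymm) ∧
    (∀ i j, minner (b i) (b j) = if i = j then 1 else 0) ∧
    (∀ A : Matrix (Fin d) (Fin d) ℝ, A.IsSymm → A ∈ Submodule.span ℝ (Set.range b)) ∧
    (∀ i : Fin (d * (d + 1) / 2), fourthMomentOp μ (b i) = lam i • b i)

/-- The second order separation parameter `s(μ)`. -/
def sep {d : ℕ} (μ : Measure (EuclideanSpace ℝ (Fin d))) : ℝ :=
  (1 / 2) * sSup { r : ℝ | ∃ μ₁ μ₂ : Measure (EuclideanSpace ℝ (Fin d)),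
    IsProbabilityMeasure μ₁ ∧ IsProbabilityMeasure μ₂ ∧
    μ = (2 : ℝ≥0∞)⁻¹ • μ₁ + (2 : ℝ≥0∞)⁻¹ • μ₂ ∧
    r = frobNorm (secondMoment μ₁ - secondMoment μ₂) }

/-- The positive semidefinite square root of a positive semidefinite matrix, spelled out as in
the older Mathlib's `Matrix.PosSemidef.sqrt` (removed since): `U diag(√λ) Uᴴ`. -/
def Matrix.PosSemidef.sqrt {d : ℕ} {B : Matrix (Fin d) (Fin d) ℝ} (hB : B.PosSemidef) :
    Matrix (Fin d) (Fin d) ℝ :=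
  hB.1.eigenvectorUnitary.1 * Matrix.diagonal ((↑) ∘ Real.sqrt ∘ hB.1.eigenvalues) *
    (star hB.1.eigenvectorUnitary : Matrix (Fin d) (Fin d) ℝ)

/-- The standard Gaussian measure `N(0, I)` on `ℝ^d`. -/
def stdGaussian (d : ℕ) : Measure (EuclideanSpace ℝ (Fin d)) :=
  (Measure.pi fun _ : Fin d => ProbabilityTheory.gaussianReal 0 1).map
    (MeasurableEquiv.toLp 2 (Fin d → ℝ))

/-- The centered Gaussian measure `N(0, B)` on `ℝ^d` with positive semidefinite
covariance matrix `B`, obtained as the pushforward of `N(0, I)` by `B^{1/2}`. -/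
def gaussianCov {d : ℕ} (B : Matrix (Fin d) (Fin d) ℝ) :
    Measure (EuclideanSpace ℝ (Fin d)) :=
  if hB : B.PosSemidef then (stdGaussian d).map (fun x => Matrix.toEuclideanLin hB.sqrt x)
  else 0

/-- The positive semidefinite square root `B^{1/2}` of a positive semidefinite matrix. -/
def psdSqrt {d : ℕ} (B : Matrix (Fin d) (Fin d) ℝ) : Matrix (Fin d) (Fin d) ℝ :=
  if hB : B.PosSemidef then hB.sqrt else 0

/-- Minkowski's inequality for finite sums, in `ℝ≥0∞`. -/
lemma lintegral_Lp_finset_sum_le {α : Type*} [MeasurableSpace α] {μ : Measure α}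
    {ι : Type*} (s : Finset ι) (F : ι → α → ℝ≥0∞) (hF : ∀ i, AEMeasurable (F i) μ)
    {q : ℝ} (hq : 1 ≤ q) :
    (∫⁻ a, (∑ i ∈ s, F i a) ^ q ∂μ) ^ (1 / q) ≤
      ∑ i ∈ s, (∫⁻ a, F i a ^ q ∂μ) ^ (1 / q) := by
  classical
  have hq0 : (0:ℝ) < q := lt_of_lt_of_le zero_lt_one hq
  induction s using Finset.induction_on with
  | empty =>
      simp [ENNReal.zero_rpow_of_pos hq0,
        ENNReal.zero_rpow_of_pos (by positivity : (0:ℝ) < 1 / q), hq0]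
  | insert a s hns ih =>
      have hsum : AEMeasurable (fun x => ∑ i ∈ s, F i x) μ :=
        Finset.aemeasurable_fun_sum s fun i _ => hF i
      calc (∫⁻ x, (∑ i ∈ insert a s, F i x) ^ q ∂μ) ^ (1 / q)
          = (∫⁻ x, ((F a + fun x => ∑ i ∈ s, F i x) x) ^ q ∂μ) ^ (1 / q) := by
            congr 1; refine lintegral_congr fun x => ?_
            rw [Finset.sum_insert hns]; rfl
        _ ≤ (∫⁻ x, F a x ^ q ∂μ) ^ (1 / q) +
              (∫⁻ x, (∑ i ∈ s, F i x) ^ q ∂μ) ^ (1 / q) :=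
            ENNReal.lintegral_Lp_add_le (hF a) hsum hq
        _ ≤ (∫⁻ x, F a x ^ q ∂μ) ^ (1 / q) +
              ∑ i ∈ s, (∫⁻ x, F i x ^ q ∂μ) ^ (1 / q) := add_le_add_right ih _
        _ = ∑ i ∈ insert a s, (∫⁻ x, F i x ^ q ∂μ) ^ (1 / q) := by
            rw [Finset.sum_insert hns]

lemma psqrt_mul_self {d : ℕ} {B : Matrix (Fin d) (Fin d) ℝ} (hB : B.PosSemidef) :
    hB.sqrt * hB.sqrt = B := by
  unfold Matrix.PosSemidef.sqrt
  have hU : (star hB.1.eigenvectorUnitary : Matrix (Fin d) (Fin d) ℝ) *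
      hB.1.eigenvectorUnitary.1 = 1 := Unitary.coe_star_mul_self _
  have hD : Matrix.diagonal ((↑) ∘ Real.sqrt ∘ hB.1.eigenvalues) *
      Matrix.diagonal ((↑) ∘ Real.sqrt ∘ hB.1.eigenvalues) =
      Matrix.diagonal (RCLike.ofReal ∘ hB.1.eigenvalues : Fin d → ℝ) := by
    rw [Matrix.diagonal_mul_diagonal]
    congr 1; funext i
    simp [Real.mul_self_sqrt (hB.eigenvalues_nonneg i)]
  conv_rhs => rw [hB.1.spectral_theorem, Unitary.conjStarAlgAut_apply]
  calc _ = hB.1.eigenvectorUnitary.1 * (Matrix.diagonal ((↑) ∘ Real.sqrt ∘ hB.1.eigenvalues) *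
        ((star hB.1.eigenvectorUnitary : Matrix (Fin d) (Fin d) ℝ) *
      hB.1.eigenvectorUnitary.1) * Matrix.diagonal ((↑) ∘ Real.sqrt ∘ hB.1.eigenvalues)) *
        (star hB.1.eigenvectorUnitary : Matrix (Fin d) (Fin d) ℝ) := by
          simp only [Matrix.mul_assoc]
    _ = _ := by rw [hU, Matrix.mul_one, hD]

lemma psqrt_symm {d : ℕ} {B : Matrix (Fin d) (Fin d) ℝ} (hB : B.PosSemidef) (a b : Fin d) :
    hB.sqrt a b = hB.sqrt b a := by
  have h : hB.sqrt.transpose = hB.sqrt := by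
    simp [Matrix.PosSemidef.sqrt, Matrix.transpose_mul, Matrix.mul_assoc,
      Matrix.star_eq_conjTranspose]
  exact congrFun (congrFun h b) a

/-- under `Lᵖ`-`L²` equivalence with constant `β`, for every `d × d` matrix
`M`, `(∫ ‖Mx‖₂ᵖ dμ(x))^{1/p} ≤ β ‖B^{1/2} Mᵀ‖_F`. -/
theorem lp_l2_matrix_bound
    (d : ℕ) (p : ℝ) (hp : 2 ≤ p) (μ : Measure (EuclideanSpace ℝ (Fin d)))
    [IsProbabilityMeasure μ] (hmom : Integrable (fun x => ‖x‖ ^ p) μ)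
    (β : ℝ) (hβ : 1 ≤ β)
    (hlpl2 : ∀ v : EuclideanSpace ℝ (Fin d),
      (∫ x, (|⟪x, v⟫|) ^ p ∂μ) ^ (1 / p) ≤
        β * (∫ x, ⟪x, v⟫ ^ 2 ∂μ) ^ ((1 : ℝ) / 2))
    (M : Matrix (Fin d) (Fin d) ℝ) :
    (∫ x, ‖Matrix.toEuclideanLin M x‖ ^ p ∂μ) ^ (1 / p) ≤
      β * frobNorm (psdSqrt (secondMoment μ) * Mᵀ) := by
  have hp0 : (0:ℝ) < p := by linarith
  set q : ℝ := p / 2 with hq_def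
  have hq1 : (1:ℝ) ≤ q := by rw [hq_def]; linarith
  have hq0 : (0:ℝ) < q := lt_of_lt_of_le zero_lt_one hq1
  have h2q : (2:ℝ) * q = p := by rw [hq_def]; ring
  set v : Fin d → EuclideanSpace ℝ (Fin d) :=
    fun i => (WithLp.equiv 2 (Fin d → ℝ)).symm (M i) with hv_def
  have hinner : ∀ (x : EuclideanSpace ℝ (Fin d)) (i : Fin d),
      ⟪x, v i⟫ = ∑ j, M i j * x j := by
    intro x i; simp [hv_def, PiLp.inner_apply, RCLike.inner_apply, mul_comm]
  have hcoord : ∀ (x : EuclideanSpace ℝ (Fin d)) (i : Fin d),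
      Matrix.toEuclideanLin M x i = ⟪x, v i⟫ := by
    intro x i; rw [hinner]; rfl
  set B : Matrix (Fin d) (Fin d) ℝ := secondMoment μ with hB_def
  have hBentry : ∀ j k, B j k = ∫ x, x j * x k ∂μ := by
    intro j k; simp [hB_def, secondMoment, mIntegral, outer]
  have hnorm_sq : ∀ x : EuclideanSpace ℝ (Fin d),
      ‖Matrix.toEuclideanLin M x‖ ^ (2:ℕ) = ∑ i, ⟪x, v i⟫ ^ 2 := by
    intro x
    rw [PiLp.norm_sq_eq_of_L2]
    exact Finset.sum_congr rfl fun i _ => by rw [← hcoord x i]; simp [sq_abs]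
  have hnorm_p : ∀ x : EuclideanSpace ℝ (Fin d),
      ‖Matrix.toEuclideanLin M x‖ ^ p = (∑ i, ⟪x, v i⟫ ^ 2) ^ q := by
    intro x
    rw [← hnorm_sq x, ← Real.rpow_natCast ‖Matrix.toEuclideanLin M x‖ 2,
      ← Real.rpow_mul (norm_nonneg _)]
    norm_num [h2q]
  -- continuity facts
  have hcont_inner : ∀ i, Continuous fun x : EuclideanSpace ℝ (Fin d) => ⟪x, v i⟫ :=
    fun i => continuous_id.inner continuous_const
  -- integrability of ‖x‖²
  have hint_norm2 : Integrable (fun x : EuclideanSpace ℝ (Fin d) => ‖x‖ ^ (2:ℕ)) μ := by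
    refine Integrable.mono' ((integrable_const (1:ℝ)).add hmom)
      ((continuous_norm.pow 2).aestronglyMeasurable) (ae_of_all _ fun x => ?_)
    have h0 : ‖‖x‖ ^ (2:ℕ)‖ = ‖x‖ ^ (2:ℕ) := by
      rw [Real.norm_eq_abs, abs_of_nonneg (by positivity)]
    rw [h0]
    simp only [Pi.add_apply]
    rcases le_or_gt ‖x‖ 1 with h | h
    · have h1 : ‖x‖ ^ (2:ℕ) ≤ 1 := pow_le_one₀ (norm_nonneg _) h
      have h2 : (0:ℝ) ≤ ‖x‖ ^ p := Real.rpow_nonneg (norm_nonneg _) _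
      linarith
    · have h1 : ‖x‖ ^ (2:ℕ) = ‖x‖ ^ ((2:ℕ):ℝ) := (Real.rpow_natCast _ 2).symm
      have h2 : ‖x‖ ^ ((2:ℕ):ℝ) ≤ ‖x‖ ^ p :=
        Real.rpow_le_rpow_of_exponent_le h.le (by exact_mod_cast hp)
      rw [h1]; linarith
  have habs_coord : ∀ (x : EuclideanSpace ℝ (Fin d)) (j : Fin d), |x j| ≤ ‖x‖ := by
    intro x j
    have h1 : (x j) ^ 2 ≤ ‖x‖ ^ 2 := by
      rw [PiLp.norm_sq_eq_of_L2]
      simp only [Real.norm_eq_abs, sq_abs]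
      exact Finset.single_le_sum (f := fun k => (x k) ^ 2) (fun k _ => sq_nonneg _)
        (Finset.mem_univ j)
    calc |x j| = Real.sqrt ((x j) ^ 2) := (Real.sqrt_sq_eq_abs _).symm
      _ ≤ Real.sqrt (‖x‖ ^ 2) := Real.sqrt_le_sqrt h1
      _ = ‖x‖ := Real.sqrt_sq (norm_nonneg _)
  have hint_jk : ∀ j k, Integrable (fun x : EuclideanSpace ℝ (Fin d) => x j * x k) μ := by
    intro j k
    refine hint_norm2.mono'
      (((EuclideanSpace.proj j).continuous.mul
        (EuclideanSpace.proj k).continuous).aestronglyMeasurable) (ae_of_all _ fun x => ?_)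
    rw [Real.norm_eq_abs, abs_mul, sq]
    exact mul_le_mul (habs_coord x j) (habs_coord x k) (abs_nonneg _) (norm_nonneg _)
  -- quadratic form values
  have hquad : ∀ w : Fin d → ℝ,
      ∫ x, (∑ j, w j * x j) ^ 2 ∂μ = ∑ j, ∑ k, w j * w k * B j k := by
    intro w
    have hpt : ∀ x : EuclideanSpace ℝ (Fin d),
        (∑ j, w j * x j) ^ 2 = ∑ j, ∑ k, w j * w k * (x j * x k) := by
      intro x; rw [sq, Finset.sum_mul_sum]
      exact Finset.sum_congr rfl fun j _ => Finset.sum_congr rfl fun k _ => by ring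
    calc ∫ x, (∑ j, w j * x j) ^ 2 ∂μ
        = ∫ x, ∑ j, ∑ k, w j * w k * (x j * x k) ∂μ := by simp_rw [hpt]
      _ = ∑ j, ∫ x, ∑ k, w j * w k * (x j * x k) ∂μ :=
          integral_finset_sum _ fun j _ =>
            integrable_finset_sum _ fun k _ => (hint_jk j k).const_mul _
      _ = ∑ j, ∑ k, ∫ x, w j * w k * (x j * x k) ∂μ :=
          Finset.sum_congr rfl fun j _ =>
            integral_finset_sum _ fun k _ => (hint_jk j k).const_mul _
      _ = ∑ j, ∑ k, w j * w k * B j k := by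
          refine Finset.sum_congr rfl fun j _ => Finset.sum_congr rfl fun k _ => ?_
          rw [integral_const_mul, hBentry]
  -- B is positive semidefinite
  have hBsym : B.IsHermitian := by
    ext j k
    simp only [Matrix.conjTranspose_apply, star_trivial]
    rw [hBentry, hBentry]
    exact integral_congr_ae (ae_of_all _ fun x => mul_comm _ _)
  have hBpsd : B.PosSemidef := by
    refine Matrix.PosSemidef.of_dotProduct_mulVec_nonneg hBsym fun y => ?_
    have h1 : dotProduct (star y) (B *ᵥ y) = ∑ j, ∑ k, y j * y k * B j k := by
      calc dotProduct (star y) (B *ᵥ y) = ∑ j, y j * ∑ k, B j k * y k := by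
            simp [dotProduct, Matrix.mulVec]
        _ = ∑ j, ∑ k, y j * y k * B j k := Finset.sum_congr rfl fun j _ => by
            rw [Finset.mul_sum]
            exact Finset.sum_congr rfl fun k _ => by ring
    rw [h1, ← hquad y]
    exact integral_nonneg fun x => sq_nonneg _
  -- the psd square root
  have hS_def : psdSqrt B = hBpsd.sqrt := dif_pos hBpsd
  set S : Matrix (Fin d) (Fin d) ℝ := hBpsd.sqrt with hSdef
  have hSmul : S * S = B := psqrt_mul_self hBpsd
  have hSsymm : ∀ a b, S a b = S b a := by
    intro a b
    exact psqrt_symm hBpsd a b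
  set C : ℝ := frobNorm (psdSqrt B * Mᵀ) with hC_def
  have hC0 : (0:ℝ) ≤ C := Real.sqrt_nonneg _
  have hC2 : C ^ 2 = ∑ i, ∑ j, ∑ k, M i j * M i k * B j k := by
    rw [hC_def, frobNorm, Real.sq_sqrt (by positivity)]
    calc ∑ a, ∑ i, ((psdSqrt B * Mᵀ) a i) ^ 2
        = ∑ a, ∑ i, (∑ k, S a k * M i k) ^ 2 := by
          simp [hS_def, Matrix.mul_apply, Matrix.transpose_apply]
      _ = ∑ i, ∑ a, (∑ k, S a k * M i k) ^ 2 := Finset.sum_comm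
      _ = ∑ i, ∑ j, ∑ k, M i j * M i k * B j k := by
          refine Finset.sum_congr rfl fun i _ => ?_
          calc ∑ a, (∑ k, S a k * M i k) ^ 2
              = ∑ a, ∑ j, ∑ k, (S a j * M i j) * (S a k * M i k) := by
                refine Finset.sum_congr rfl fun a _ => by rw [sq, Finset.sum_mul_sum]
            _ = ∑ j, ∑ a, ∑ k, (S a j * M i j) * (S a k * M i k) := Finset.sum_comm
            _ = ∑ j, ∑ k, ∑ a, (S a j * M i j) * (S a k * M i k) :=
                Finset.sum_congr rfl fun j _ => Finset.sum_comm
            _ = ∑ j, ∑ k, M i j * M i k * B j k := by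
                refine Finset.sum_congr rfl fun j _ => Finset.sum_congr rfl fun k _ => ?_
                have hBjk : ∑ a, S a j * S a k = B j k := by
                  have h2 : ∑ a, S j a * S a k = B j k := by
                    rw [← Matrix.mul_apply, hSmul]
                  rw [← h2]
                  exact Finset.sum_congr rfl fun a _ => by rw [hSsymm a j]
                rw [← hBjk, Finset.mul_sum]
                exact Finset.sum_congr rfl fun a _ => by ring
  have hK_eq : ∀ i, (∫ x, ⟪x, v i⟫ ^ 2 ∂μ) = ∑ j, ∑ k, M i j * M i k * B j k := by
    intro i
    rw [← hquad (M i)]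
    exact integral_congr_ae (ae_of_all _ fun x => by simp only [hinner])
  have hsumK : ∑ i, ∫ x, ⟪x, v i⟫ ^ 2 ∂μ = C ^ 2 := by
    rw [hC2]; exact Finset.sum_congr rfl fun i _ => hK_eq i
  -- integrability of |⟪x, v i⟫|^p
  have hJ_int : ∀ i, Integrable (fun x => |⟪x, v i⟫| ^ p) μ := by
    intro i
    refine (hmom.const_mul (‖v i‖ ^ p)).mono'
      (((hcont_inner i).abs.rpow_const fun x => Or.inr hp0.le).aestronglyMeasurable)
      (ae_of_all _ fun x => ?_)
    rw [Real.norm_eq_abs, abs_of_nonneg (Real.rpow_nonneg (abs_nonneg _) _)]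
    calc |⟪x, v i⟫| ^ p ≤ (‖x‖ * ‖v i‖) ^ p :=
          Real.rpow_le_rpow (abs_nonneg _) (abs_real_inner_le_norm _ _) hp0.le
      _ = ‖v i‖ ^ p * ‖x‖ ^ p := by
          rw [Real.mul_rpow (norm_nonneg _) (norm_nonneg _)]; ring
  -- key per-coordinate inequality
  have hJK : ∀ i, (∫ x, |⟪x, v i⟫| ^ p ∂μ) ^ (1/q) ≤ β ^ 2 * ∫ x, ⟪x, v i⟫ ^ 2 ∂μ := by
    intro i
    have hJ0 : (0:ℝ) ≤ ∫ x, |⟪x, v i⟫| ^ p ∂μ :=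
      integral_nonneg fun x => Real.rpow_nonneg (abs_nonneg _) _
    have hK0 : (0:ℝ) ≤ ∫ x, ⟪x, v i⟫ ^ 2 ∂μ := integral_nonneg fun x => sq_nonneg _
    have h1 : (∫ x, |⟪x, v i⟫| ^ p ∂μ) ^ (1/q) =
        ((∫ x, |⟪x, v i⟫| ^ p ∂μ) ^ (1/p)) ^ (2:ℕ) := by
      rw [← Real.rpow_natCast ((∫ x, |⟪x, v i⟫| ^ p ∂μ) ^ (1/p)) 2,
        ← Real.rpow_mul hJ0]
      congr 1
      rw [hq_def]; field_simp; norm_num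
    have h2 : ((∫ x, ⟪x, v i⟫ ^ 2 ∂μ) ^ ((1:ℝ)/2)) ^ (2:ℕ) = ∫ x, ⟪x, v i⟫ ^ 2 ∂μ := by
      rw [← Real.rpow_natCast ((∫ x, ⟪x, v i⟫ ^ 2 ∂μ) ^ ((1:ℝ)/2)) 2,
        ← Real.rpow_mul hK0]
      norm_num
    rw [h1]
    calc ((∫ x, |⟪x, v i⟫| ^ p ∂μ) ^ (1/p)) ^ (2:ℕ)
        ≤ (β * (∫ x, ⟪x, v i⟫ ^ 2 ∂μ) ^ ((1:ℝ)/2)) ^ (2:ℕ) :=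
          pow_le_pow_left₀ (Real.rpow_nonneg hJ0 _) (hlpl2 (v i)) 2
      _ = β ^ 2 * ∫ x, ⟪x, v i⟫ ^ 2 ∂μ := by rw [mul_pow, h2]
  -- the main ENNReal chain
  set Λ : ℝ≥0∞ := ∫⁻ x, ENNReal.ofReal (‖Matrix.toEuclideanLin M x‖ ^ p) ∂μ with hΛdef
  have hF_meas : ∀ i, AEMeasurable
      (fun x : EuclideanSpace ℝ (Fin d) => ENNReal.ofReal (⟪x, v i⟫ ^ 2)) μ := fun i =>
    (ENNReal.continuous_ofReal.comp ((hcont_inner i).pow 2)).measurable.aemeasurable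
  have hΛ_eq : Λ = ∫⁻ x, (∑ i, ENNReal.ofReal (⟪x, v i⟫ ^ 2)) ^ q ∂μ := by
    refine lintegral_congr fun x => ?_
    rw [hnorm_p x, ← ENNReal.ofReal_sum_of_nonneg fun i _ => sq_nonneg _,
      ENNReal.ofReal_rpow_of_nonneg (by positivity) hq0.le]
  have hFq : ∀ i, ∫⁻ x, (ENNReal.ofReal (⟪x, v i⟫ ^ 2)) ^ q ∂μ =
      ENNReal.ofReal (∫ x, |⟪x, v i⟫| ^ p ∂μ) := by
    intro i
    have hpt : ∀ t : ℝ, (ENNReal.ofReal (t ^ 2)) ^ q = ENNReal.ofReal (|t| ^ p) := by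
      intro t
      rw [ENNReal.ofReal_rpow_of_nonneg (sq_nonneg t) hq0.le]
      congr 1
      rw [← sq_abs t, ← Real.rpow_natCast |t| 2, ← Real.rpow_mul (abs_nonneg t)]
      norm_num [h2q]
    calc ∫⁻ x, (ENNReal.ofReal (⟪x, v i⟫ ^ 2)) ^ q ∂μ
        = ∫⁻ x, ENNReal.ofReal (|⟪x, v i⟫| ^ p) ∂μ := lintegral_congr fun x => hpt _
      _ = ENNReal.ofReal (∫ x, |⟪x, v i⟫| ^ p ∂μ) :=
          (ofReal_integral_eq_lintegral_ofReal (hJ_int i)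
            (ae_of_all _ fun x => Real.rpow_nonneg (abs_nonneg _) _)).symm
  have hstep : Λ ^ (1/q) ≤ ENNReal.ofReal ((β * C) ^ 2) := by
    rw [hΛ_eq]
    refine le_trans
      (lintegral_Lp_finset_sum_le Finset.univ
        (fun i x => ENNReal.ofReal (⟪x, v i⟫ ^ 2)) hF_meas hq1) ?_
    have hterm : ∀ i, (∫⁻ x, (ENNReal.ofReal (⟪x, v i⟫ ^ 2)) ^ q ∂μ) ^ (1/q) ≤
        ENNReal.ofReal (β ^ 2 * ∫ x, ⟪x, v i⟫ ^ 2 ∂μ) := by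
      intro i
      rw [hFq i, ENNReal.ofReal_rpow_of_nonneg
        (integral_nonneg fun x => Real.rpow_nonneg (abs_nonneg _) _) (by positivity)]
      exact ENNReal.ofReal_le_ofReal (hJK i)
    calc ∑ i, (∫⁻ x, (ENNReal.ofReal (⟪x, v i⟫ ^ 2)) ^ q ∂μ) ^ (1/q)
        ≤ ∑ i, ENNReal.ofReal (β ^ 2 * ∫ x, ⟪x, v i⟫ ^ 2 ∂μ) :=
          Finset.sum_le_sum fun i _ => hterm i
      _ = ENNReal.ofReal (∑ i, β ^ 2 * ∫ x, ⟪x, v i⟫ ^ 2 ∂μ) :=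
          (ENNReal.ofReal_sum_of_nonneg fun i _ =>
            mul_nonneg (sq_nonneg β) (integral_nonneg fun x => sq_nonneg _)).symm
      _ = ENNReal.ofReal ((β * C) ^ 2) := by
          rw [← Finset.mul_sum, hsumK, mul_pow]
  have hΛ_le : Λ ≤ ENNReal.ofReal ((β * C) ^ 2) ^ q := by
    have h := ENNReal.rpow_le_rpow hstep hq0.le
    rwa [← ENNReal.rpow_mul, one_div_mul_cancel hq0.ne', ENNReal.rpow_one] at h
  -- back to the real integral
  have hML : Continuous fun x : EuclideanSpace ℝ (Fin d) => Matrix.toEuclideanLin M x :=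
    (Matrix.toEuclideanLin M).continuous_of_finiteDimensional
  have hA_meas : AEStronglyMeasurable
      (fun x : EuclideanSpace ℝ (Fin d) => ‖Matrix.toEuclideanLin M x‖ ^ p) μ :=
    ((continuous_norm.comp hML).rpow_const fun x => Or.inr hp0.le).aestronglyMeasurable
  have hA_eq : ∫ x, ‖Matrix.toEuclideanLin M x‖ ^ p ∂μ = Λ.toReal :=
    integral_eq_lintegral_of_nonneg_ae
      (ae_of_all _ fun x => Real.rpow_nonneg (norm_nonneg _) _) hA_meas
  have hBC0 : (0:ℝ) ≤ β * C := mul_nonneg (by linarith) hC0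
  have h1 : ENNReal.ofReal ((β * C) ^ 2) ^ q = ENNReal.ofReal ((β * C) ^ p) := by
    rw [ENNReal.ofReal_rpow_of_nonneg (sq_nonneg _) hq0.le]
    congr 1
    rw [← Real.rpow_natCast (β * C) 2, ← Real.rpow_mul hBC0]
    norm_num [h2q]
  have hfinal : ∫ x, ‖Matrix.toEuclideanLin M x‖ ^ p ∂μ ≤ (β * C) ^ p := by
    rw [hA_eq]
    calc Λ.toReal ≤ (ENNReal.ofReal ((β * C) ^ p)).toReal := by
          refine ENNReal.toReal_mono ENNReal.ofReal_ne_top ?_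
          rw [← h1]; exact hΛ_le
      _ = (β * C) ^ p := ENNReal.toReal_ofReal (Real.rpow_nonneg hBC0 _)
  calc (∫ x, ‖Matrix.toEuclideanLin M x‖ ^ p ∂μ) ^ (1/p)
      ≤ ((β * C) ^ p) ^ (1/p) :=
        Real.rpow_le_rpow
          (integral_nonneg fun x => Real.rpow_nonneg (norm_nonneg _) _) hfinal
          (by positivity)
    _ = β * C := by
        rw [← Real.rpow_mul hBC0, mul_one_div_cancel hp0.ne', Real.rpow_one]
end
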